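/- Let G be a finite simple bipartite graph on n vertices. Then G is C_{4k}-free (contains no cycle whose length is divisible by 4) if and only if π(G,x) = φ_p(G,x), where π(G,x) = per(xI − A(G)) is the permanental polynomial and φ_p(G,x) = Σ_{i even} (−1)^{i/2} a_i x^{n−i} is the modified characteristic polynomial built from the coefficients a_i of the characteristic polynomial φ(G,x) = det(xI − A(G)). -/

import Mathlib

open Polynomial SimpleGraph
open scoped Classical

noncomputable section

/-- The adjacency matrix of a simple graph `G`, with entries in `R`. -/
def adjMat (R : Type*) [Zero R] [One R] {V : Type*} [Fintype V] (G : SimpleGraph V) :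
    Matrix V V R := fun u v => if G.Adj u v then 1 else 0

/-- The characteristic polynomial `det (xI - A(G))` of a simple graph `G`. -/
def charPolyG (R : Type*) [CommRing R] {V : Type*} [Fintype V] (G : SimpleGraph V) : R[X] :=
  (adjMat R G).charpoly

/-- The permanental polynomial `per (xI - A(G))` of a simple graph `G`. -/
def permPolyG (R : Type*) [CommRing R] {V : Type*} [Fintype V] (G : SimpleGraph V) : R[X] :=
  (Matrix.charmatrix (adjMat R G)).permanent

/-- The modified characteristic polynomial `φ_p(G,x) = ∑_{i even} (-1)^{i/2} a_i x^{n-i}`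
of a (bipartite) graph `G` on `n` vertices, where `a_i` is the coefficient of `x^{n-i}`
in the characteristic polynomial. -/
def phiP {V : Type*} [Fintype V] (G : SimpleGraph V) : ℝ[X] :=
  ∑ i ∈ Finset.range (Fintype.card V + 1),
    if Even i then
      C ((-1 : ℝ) ^ (i / 2) * (charPolyG ℝ G).coeff (Fintype.card V - i)) *
        X ^ (Fintype.card V - i)
    else 0

/-- `G` contains no cycle whose length is divisible by 4. -/
def C4kFree {V : Type*} (G : SimpleGraph V) : Prop :=
  ¬ ∃ (v : V) (c : G.Walk v v), c.IsCycle ∧ 4 ∣ c.length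

/-- `G` is `4k`-intercyclic: it contains no two vertex-disjoint cycles,
each of length divisible by 4. -/
def Intercyclic4k {V : Type*} (G : SimpleGraph V) : Prop :=
  ¬ ∃ (u v : V) (c : G.Walk u u) (d : G.Walk v v),
      c.IsCycle ∧ d.IsCycle ∧ 4 ∣ c.length ∧ 4 ∣ d.length ∧
      ∀ x, x ∈ c.support → x ∉ d.support

/-- A subgraph `R` of `G` is a cycle of `G` if it is the subgraph traced by some cycle walk. -/
def IsCycleSubgraph {V : Type*} (G : SimpleGraph V) (R : G.Subgraph) : Prop :=
  ∃ (v : V) (c : G.Walk v v), c.IsCycle ∧ R = c.toSubgraph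

/-- The set of all `4k`-cycles (cycles of length divisible by 4) of `G`,
viewed as subgraphs. -/
def cycles4k {V : Type*} (G : SimpleGraph V) : Set G.Subgraph :=
  {R | ∃ (v : V) (c : G.Walk v v), c.IsCycle ∧ 4 ∣ c.length ∧ R = c.toSubgraph}

/-- The connected component `c` of the subgraph `H` is a single edge (a `K₂`). -/
def IsEdgeComp {V : Type*} {G : SimpleGraph V} (H : G.Subgraph)
    (c : H.coe.ConnectedComponent) : Prop :=
  ∃ x y : H.verts, H.coe.Adj x y ∧ c.supp = {x, y}

/-- The connected component `c` of the subgraph `H` is a cycle: there is a cycle walk whose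
support is exactly `c` and which uses every edge of `H` inside `c`. -/
def IsCycleComp {V : Type*} {G : SimpleGraph V} (H : G.Subgraph)
    (c : H.coe.ConnectedComponent) : Prop :=
  ∃ (v : H.verts) (w : H.coe.Walk v v), w.IsCycle ∧
    {x | x ∈ w.support} = c.supp ∧
    ∀ x y : H.verts, H.coe.Adj x y → x ∈ c.supp → w.toSubgraph.Adj x y

/-- A Sachs subgraph of `G`: a subgraph each of whose connected components is either
a single edge or a cycle. -/
def IsSachs {V : Type*} {G : SimpleGraph V} (H : G.Subgraph) : Prop :=
  ∀ c : H.coe.ConnectedComponent, IsEdgeComp H c ∨ IsCycleComp H c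

/-- The number of connected components of the subgraph `H`. -/
def pCount {V : Type*} {G : SimpleGraph V} (H : G.Subgraph) : ℕ :=
  Nat.card H.coe.ConnectedComponent

/-- The number of components of `H` that are cycles of length divisible by 4. -/
def sCount {V : Type*} {G : SimpleGraph V} (H : G.Subgraph) : ℕ :=
  Set.ncard {c : H.coe.ConnectedComponent | IsCycleComp H c ∧ c.supp.ncard % 4 = 0}

/-- The number of components of `H` that are cycles of length congruent to 2 mod 4. -/
def tCount {V : Type*} {G : SimpleGraph V} (H : G.Subgraph) : ℕ :=
  Set.ncard {c : H.coe.ConnectedComponent | IsCycleComp H c ∧ c.supp.ncard % 4 = 2}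

/-- The number of components of `H` that are cycles. -/
def cycCount {V : Type*} {G : SimpleGraph V} (H : G.Subgraph) : ℕ :=
  Set.ncard {c : H.coe.ConnectedComponent | IsCycleComp H c}

/-- `R` is a union of connected components of `H`. -/
def IsComponentUnion {V : Type*} {G : SimpleGraph V} (R H : G.Subgraph) : Prop :=
  R ≤ H ∧ ∀ x y, H.Adj x y → x ∈ R.verts → R.Adj x y



/-! ### Auxiliary machinery -/

/-- index congruence for list getElem -/
lemma gicAux {α : Type*} (l : List α) {i j : ℕ} (h : i = j) (hj : j < l.length) :
    l[i]'(h ▸ hj) = l[j] := by subst h; rfl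

section AuxPerm
variable {V : Type*} [Fintype V] (G : SimpleGraph V)

/-- compatibility of a permutation with a graph: every moved vertex is adjacent to its image -/
def PermCompat (σ : Equiv.Perm V) : Prop := ∀ v : V, σ v ≠ v → G.Adj v (σ v)

lemma adjMat_diag (v : V) : adjMat ℝ G v v = 0 := by
  simp [adjMat]

lemma prod_charmatrix (σ : Equiv.Perm V) :
    (∏ v, Matrix.charmatrix (adjMat ℝ G) (σ v) v) =
      if PermCompat G σ then
        (-1 : ℝ[X]) ^ σ.support.card * X ^ (Fintype.card V - σ.support.card) else 0 := by
  classical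
  rw [← Finset.prod_mul_prod_compl σ.support]
  have h2 : (∏ v ∈ σ.supportᶜ, Matrix.charmatrix (adjMat ℝ G) (σ v) v)
      = X ^ (Fintype.card V - σ.support.card) := by
    rw [← Finset.card_compl]
    rw [Finset.prod_congr rfl (fun v hv => ?_), Finset.prod_const]
    have hfix : σ v = v := by
      simpa using (Equiv.Perm.notMem_support.mp (Finset.mem_compl.mp hv))
    rw [hfix, Matrix.charmatrix_apply_eq, adjMat_diag, map_zero, sub_zero]
  rw [h2]
  by_cases hco : PermCompat G σ
  · simp only [hco, if_true]
    congr 1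
    rw [Finset.prod_congr rfl (fun v hv => ?_), Finset.prod_const]
    have hne : σ v ≠ v := Equiv.Perm.mem_support.mp hv
    rw [Matrix.charmatrix_apply_ne _ _ _ hne]
    have : adjMat ℝ G (σ v) v = 1 := by
      simp [adjMat, (hco v hne).symm]
    rw [this, map_one]
  · simp only [hco, if_false]
    obtain ⟨v, hv⟩ := not_forall.mp hco
    obtain ⟨hne, hnadj⟩ := Classical.not_imp.mp hv
    rw [Finset.prod_eq_zero (Equiv.Perm.mem_support.mpr hne) ?_, zero_mul]
    rw [Matrix.charmatrix_apply_ne _ _ _ hne]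
    have : adjMat ℝ G (σ v) v = 0 := by
      simp only [adjMat, ite_eq_right_iff]
      intro h; exact absurd h.symm hnadj
    rw [this, map_zero, neg_zero]

lemma even_card_of_compat (hbip : G.Colorable 2) (σ : Equiv.Perm V) (h : PermCompat G σ) :
    Even σ.support.card := by
  classical
  obtain ⟨f⟩ := hbip
  set S0 := σ.support.filter (fun v => f v = 0) with hS0
  set S1 := σ.support.filter (fun v => f v ≠ 0) with hS1
  have hsplit : σ.support.card = S0.card + S1.card := by
    rw [hS0, hS1]; exact (Finset.card_filter_add_card_filter_not _).symm
  have key : ∀ v ∈ σ.support, f (σ v) ≠ f v := by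
    intro v hv
    exact (f.valid (h v (Equiv.Perm.mem_support.mp hv))).symm
  have hmap : ∀ v ∈ S0, σ v ∈ S1 := by
    intro v hv
    rw [hS0, Finset.mem_filter] at hv
    rw [hS1, Finset.mem_filter]
    exact ⟨Equiv.Perm.apply_mem_support.mpr hv.1, by rw [← hv.2] at *; exact key v hv.1⟩
  have hmap' : ∀ v ∈ S1, σ v ∈ S0 := by
    intro v hv
    rw [hS1, Finset.mem_filter] at hv
    rw [hS0, Finset.mem_filter]
    refine ⟨Equiv.Perm.apply_mem_support.mpr hv.1, ?_⟩
    have := key v hv.1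
    omega
  have hcard : S0.card = S1.card := by
    apply le_antisymm
    · exact Finset.card_le_card_of_injOn σ hmap (fun a _ b _ hab => σ.injective hab)
    · exact Finset.card_le_card_of_injOn σ hmap' (fun a _ b _ hab => σ.injective hab)
  rw [hsplit, hcard]
  exact Even.add_self _

end AuxPerm

section MkWalk
variable {V : Type*} {G : SimpleGraph V}

/-- walk along a sequence of pairwise-adjacent vertices -/
def mkWalk (G : SimpleGraph V) (f : ℕ → V) :
    (k : ℕ) → (∀ i < k, G.Adj (f i) (f (i + 1))) → G.Walk (f 0) (f k)
  | 0, _ => Walk.nil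
  | (k + 1), h => (mkWalk G f k (fun i hi => h i (by omega))).concat (h k (by omega))

lemma mkWalk_length (f : ℕ → V) (k : ℕ) (h : ∀ i < k, G.Adj (f i) (f (i + 1))) :
    (mkWalk G f k h).length = k := by
  induction k with
  | zero => rfl
  | succ k ih => rw [mkWalk, Walk.length_concat, ih]

lemma mkWalk_support (f : ℕ → V) (k : ℕ) (h : ∀ i < k, G.Adj (f i) (f (i + 1))) :
    (mkWalk G f k h).support = (List.range (k + 1)).map f := by
  induction k with
  | zero => rfl
  | succ k ih =>
      rw [mkWalk, Walk.support_concat, ih, List.range_succ (n := k + 1), List.map_append]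
      simp [List.concat_eq_append]

lemma mkWalk_edges (f : ℕ → V) (k : ℕ) (h : ∀ i < k, G.Adj (f i) (f (i + 1))) :
    (mkWalk G f k h).edges = (List.range k).map (fun i => s(f i, f (i + 1))) := by
  induction k with
  | zero => rfl
  | succ k ih =>
      rw [mkWalk, Walk.edges_concat, ih, List.range_succ (n := k), List.map_append]
      simp [List.concat_eq_append]

end MkWalk

section CycleToWalk
variable {V : Type*} [Fintype V] {G : SimpleGraph V}

lemma cycle_perm_gives_walk (c : Equiv.Perm V) (hc : c.IsCycle) (hcompat : PermCompat G c)
    (hm : 3 ≤ c.support.card) :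
    ∃ (v : V) (w : G.Walk v v), w.IsCycle ∧ w.length = c.support.card := by
  classical
  obtain ⟨a, ha⟩ := hc.nonempty_support
  set m := c.support.card with hmdef
  set f : ℕ → V := fun k => (c ^ k) a with hf
  have hcyc : c.IsCycleOn ↑c.support := by
    have := hc.isCycleOn
    rwa [← Equiv.Perm.coe_support_eq_set_support] at this
  have hpow : ∀ k : ℕ, (c ^ k) a = a ↔ m ∣ k := fun k => hcyc.pow_apply_eq ha
  have hdvd : ∀ i j : ℕ, i ≤ j → f i = f j → m ∣ j - i := by
    intro i j hij hfe
    have h1 : (c ^ i) ((c ^ (j - i)) a) = (c ^ i) a := by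
      rw [← Equiv.Perm.mul_apply, ← pow_add]
      rw [show i + (j - i) = j by omega]
      exact hfe.symm
    exact (hpow _).mp ((c ^ i).injective h1)
  have hmemsup : ∀ k : ℕ, f k ∈ c.support := by
    intro k
    exact Equiv.Perm.pow_apply_mem_support.mpr ha
  have hadj : ∀ i : ℕ, G.Adj (f i) (f (i + 1)) := by
    intro i
    have hnext : f (i + 1) = c (f i) := by
      rw [hf]; simp only [pow_succ', Equiv.Perm.mul_apply]
    rw [hnext]
    exact hcompat _ (Equiv.Perm.mem_support.mp (hmemsup i))
  have hm1 : m - 1 + 1 = m := by omega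
  let p0 : G.Walk (f 1) (f (m - 1 + 1)) :=
    mkWalk G (fun k => f (k + 1)) (m - 1) (fun i _ => hadj (i + 1))
  have hfm : f (m - 1 + 1) = a := by rw [hm1]; exact (hpow m).mpr dvd_rfl
  let p : G.Walk (f 1) a := p0.copy rfl hfm
  have hps : p.support = (List.range m).map (fun k => f (k + 1)) := by
    rw [Walk.support_copy]
    rw [mkWalk_support, hm1]
  have hpe : p.edges = (List.range (m - 1)).map (fun i => s(f (i + 1), f (i + 2))) := by
    rw [Walk.edges_copy]
    rw [mkWalk_edges]
  have hinj : ∀ i j, i < m → j < m → f (i + 1) = f (j + 1) → i = j := by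
    intro i j hi hj hfe
    by_cases heq : i = j
    · exact heq
    rcases le_total i j with hle | hle
    · have h1 := hdvd _ _ (by omega) hfe
      have h2 : m ∣ j - i := by rwa [show j + 1 - (i + 1) = j - i by omega] at h1
      have := Nat.le_of_dvd (by omega) h2
      omega
    · have h1 := hdvd _ _ (by omega : j + 1 ≤ i + 1) hfe.symm
      have h2 : m ∣ i - j := by rwa [show i + 1 - (j + 1) = i - j by omega] at h1
      have := Nat.le_of_dvd (by omega) h2
      omega
  have hpath : p.IsPath := by
    rw [Walk.isPath_def, hps]
    refine List.Nodup.map_on ?_ (List.nodup_range (n := m))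
    intro x hx y hy hxy
    rw [List.mem_range] at hx hy
    exact hinj x y hx hy hxy
  have hadj0 : G.Adj a (f 1) := hadj 0
  have hedge : s(a, f 1) ∉ p.edges := by
    rw [hpe]
    intro hmem
    obtain ⟨i, hi, heq⟩ := List.mem_map.mp hmem
    rw [List.mem_range] at hi
    rw [Sym2.eq_iff] at heq
    have ha0 : a = f 0 := rfl
    rcases heq with ⟨h1, h2⟩ | ⟨h1, h2⟩
    · have : m ∣ i + 1 - 0 := hdvd 0 (i + 1) (by omega) (ha0 ▸ h1.symm)
      have := Nat.le_of_dvd (by omega) this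
      omega
    · have hd1 : m ∣ i + 2 := by
        have := hdvd 0 (i + 2) (by omega) (ha0 ▸ h2.symm)
        simpa using this
      have hi2 : i + 2 = m := by
        have := Nat.le_of_dvd (by omega) hd1
        omega
      have hd2 : m ∣ i := by
        have := hdvd 1 (i + 1) (by omega) h1.symm
        simpa using this
      rcases Nat.eq_zero_or_pos i with h0 | h0
      · omega
      · have := Nat.le_of_dvd h0 hd2
        omega
  refine ⟨a, Walk.cons hadj0 p, ?_, ?_⟩
  · exact (Walk.cons_isCycle_iff p hadj0).mpr ⟨hpath, hedge⟩
  · show (Walk.cons hadj0 p).length = m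
    have hlen : p.length = p0.length := Walk.length_copy p0 rfl hfm
    rw [Walk.length_cons, hlen, mkWalk_length]
    omega

lemma walk_gives_perm (v : V) (w : G.Walk v v) (hw : w.IsCycle) (hlen4 : 4 ≤ w.length) :
    ∃ σ : Equiv.Perm V, σ.IsCycle ∧ PermCompat G σ ∧ σ.support.card = w.length := by
  classical
  set s : List V := w.support with hs
  have hslen : s.length = w.length + 1 := w.length_support
  have hlast : s.getLast (by rw [hs]; simp) = v := w.getLast_support
  set l : List V := s.dropLast with hl
  have hllen : l.length = w.length := by rw [hl, List.length_dropLast, hslen]; rfl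
  have hcons : s = v :: s.tail := w.support_eq_cons
  have httl : s.tail.length = w.length := by
    rw [List.length_tail, hslen]
    omega
  have htne : s.tail ≠ [] := by
    intro h
    rw [h] at httl
    simp at httl
    omega
  have hnodup : l.Nodup := by
    have htail : s.tail.Nodup := hw.support_nodup
    have htl : s.tail = s.tail.dropLast ++ [v] := by
      conv_lhs => rw [← List.dropLast_append_getLast htne]
      rw [List.getLast_tail, hlast]
    have hdl : l = v :: s.tail.dropLast := by
      rw [hl]
      conv_lhs => rw [hcons]
      rw [List.dropLast_cons_of_ne_nil htne]
    rw [hdl]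
    refine List.nodup_cons.mpr ⟨?_, ?_⟩
    · intro hmem
      have := htl ▸ htail
      rw [List.nodup_append] at this
      exact this.2.2 v hmem v (by simp) rfl
    · exact List.Nodup.sublist (List.sublist_append_left _ _) (htl ▸ htail)
  have hchain : List.Chain' G.Adj s := w.isChain_adj_support
  have hadjs : ∀ i (h : i + 1 < s.length), G.Adj (s[i]'(by omega)) (s[i + 1]'h) := by
    have := List.isChain_iff_getElem.mp hchain
    intro i h
    have h2 := this i (by omega)
    simpa [List.get_eq_getElem] using h2
  have hsv0 : s[0]'(by omega) = v := by
    have h1 : s.head (by rw [hs]; simp) = v := w.head_support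
    rw [List.head_eq_getElem] at h1
    exact h1
  have hslastv : s[w.length]'(by omega) = v := by
    have h2 := hlast
    rw [List.getLast_eq_getElem, gicAux s (by omega : s.length - 1 = w.length) (by omega)] at h2
    exact h2
  have hlget : ∀ i (h : i < l.length), l[i] = s[i]'(by rw [hslen]; rw [hllen] at h; omega) := by
    intro i h
    exact List.getElem_dropLast h
  have hadjl : ∀ i (h : i + 1 < l.length), G.Adj (l[i]'(by omega)) (l[i + 1]'h) := by
    intro i h
    rw [hlget i (by omega), hlget (i+1) h]
    exact hadjs i (by omega)
  have hadjlast : G.Adj (l[l.length - 1]'(by omega)) (l[0]'(by omega)) := by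
    rw [hlget (l.length - 1) (by omega), hlget 0 (by omega), hsv0,
      gicAux s (by omega : l.length - 1 = w.length - 1) (by omega)]
    have h1 := hadjs (w.length - 1) (by omega)
    rw [gicAux s (by omega : w.length - 1 + 1 = w.length) (by omega), hslastv] at h1
    exact h1
  refine ⟨l.formPerm, ?_, ?_, ?_⟩
  · exact List.isCycle_formPerm hnodup (by omega)
  · intro x hx
    have hxmem : x ∈ l := by
      by_contra hxm
      exact hx (List.formPerm_apply_of_notMem hxm)
    obtain ⟨i, hi, hix⟩ := List.mem_iff_getElem.mp hxmem
    subst hix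
    rw [List.formPerm_apply_getElem _ hnodup i hi]
    by_cases hend : i + 1 < l.length
    · rw [gicAux l (Nat.mod_eq_of_lt (by omega)) hend]
      exact hadjl i hend
    · have hieq : i = l.length - 1 := by omega
      have hmod : (i + 1) % l.length = 0 := by
        rw [show i + 1 = l.length by omega]
        exact Nat.mod_self _
      rw [gicAux l hmod (by omega), gicAux l hieq (by omega)]
      exact hadjlast
  · rw [List.support_formPerm_of_nodup l hnodup ?_, List.toFinset_card_of_nodup hnodup, hllen]
    intro x hx
    rw [hx] at hllen
    simp at hllen
    omega

end CycleToWalk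

section SignLemma
variable {V : Type*} [Fintype V] {G : SimpleGraph V}

lemma sign_compat (hbip : G.Colorable 2) (hfree : C4kFree G) (σ : Equiv.Perm V) :
    PermCompat G σ → ((Equiv.Perm.sign σ : ℤ) : ℝ) = (-1 : ℝ) ^ (σ.support.card / 2) := by
  classical
  induction σ using Equiv.Perm.cycle_induction_on with
  | base_one => intro _; simp
  | base_cycles c hc =>
      intro hco
      have hm2 : 2 ≤ c.support.card := hc.two_le_card_support
      have heven : Even c.support.card := even_card_of_compat G hbip c hco
      have hnot4 : ¬ (4 ∣ c.support.card) := by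
        intro h4
        have hm3 : 3 ≤ c.support.card := by
          obtain ⟨k, hk⟩ := h4; omega
        obtain ⟨v, w, hwc, hwl⟩ := cycle_perm_gives_walk c hc hco hm3
        exact hfree ⟨v, w, hwc, by rw [hwl]; exact h4⟩
      have hmod : c.support.card % 4 = 2 := by
        obtain ⟨k, hk⟩ := heven
        omega
      have hodd : Odd (c.support.card / 2) := by
        rw [Nat.odd_iff]
        omega
      rw [hc.sign]
      have h1 : (-1 : ℝ) ^ c.support.card = 1 := heven.neg_one_pow
      have h2 : (-1 : ℝ) ^ (c.support.card / 2) = -1 := hodd.neg_one_pow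
      rw [h2]
      push_cast
      rw [h1]
  | induction_disjoint σ τ hdisj hcyc ih1 ih2 =>
      intro hco
      have hcσ : PermCompat G σ := by
        intro v hv
        have hτv : τ v = v := by
          rcases hdisj v with h | h
          · exact absurd h hv
          · exact h
        have hmul : (σ * τ) v = σ v := by
          rw [Equiv.Perm.mul_apply, hτv]
        have := hco v (by rw [hmul]; exact hv)
        rwa [hmul] at this
      have hcτ : PermCompat G τ := by
        intro v hv
        have hστ : σ (τ v) = τ v := by
          rcases hdisj (τ v) with h | h
          · exact h
          · exact absurd (τ.injective h) hv
        have hmul : (σ * τ) v = τ v := by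
          rw [Equiv.Perm.mul_apply, hστ]
        have := hco v (by rw [hmul]; exact hv)
        rwa [hmul] at this
      have hcard := hdisj.card_support_mul
      obtain ⟨x, hx⟩ := even_card_of_compat G hbip σ hcσ
      obtain ⟨y, hy⟩ := even_card_of_compat G hbip τ hcτ
      have hsplit : (σ * τ).support.card / 2 = σ.support.card / 2 + τ.support.card / 2 := by
        omega
      rw [map_mul, hsplit, pow_add]
      push_cast
      rw [ih1 hcσ, ih2 hcτ]

end SignLemma

section PolyLemmas
variable {V : Type*} [Fintype V] (G : SimpleGraph V)

lemma perm_poly_eq (hbip : G.Colorable 2) :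
    permPolyG ℝ G = ∑ σ : Equiv.Perm V,
      if PermCompat G σ then (X : ℝ[X]) ^ (Fintype.card V - σ.support.card) else 0 := by
  rw [permPolyG, Matrix.permanent]
  refine Finset.sum_congr rfl fun σ _ => ?_
  rw [prod_charmatrix]
  by_cases h : PermCompat G σ
  · simp only [h, if_true]
    rw [Even.neg_one_pow (even_card_of_compat G hbip σ h), one_mul]
  · simp [h]

lemma char_poly_eq :
    charPolyG ℝ G = ∑ σ : Equiv.Perm V,
      if PermCompat G σ then
        C (((Equiv.Perm.sign σ : ℤ) : ℝ) * (-1 : ℝ) ^ σ.support.card) *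
          X ^ (Fintype.card V - σ.support.card) else 0 := by
  rw [charPolyG, Matrix.charpoly, Matrix.det_apply']
  refine Finset.sum_congr rfl fun σ _ => ?_
  rw [prod_charmatrix]
  by_cases h : PermCompat G σ
  · simp only [h, if_true]
    rw [map_mul, map_pow, map_neg, map_one, map_intCast]
    ring
  · simp [h]

lemma coeff_sum_aux (P : Equiv.Perm V → Prop) (c : Equiv.Perm V → ℝ) (i : ℕ)
    (hi : i ≤ Fintype.card V) :
    (∑ σ : Equiv.Perm V,
        if P σ then C (c σ) * X ^ (Fintype.card V - σ.support.card) else 0).coeff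
      (Fintype.card V - i)
      = ∑ σ : Equiv.Perm V, if P σ ∧ σ.support.card = i then c σ else 0 := by
  classical
  rw [Polynomial.finset_sum_coeff]
  refine Finset.sum_congr rfl fun σ _ => ?_
  have hd : σ.support.card ≤ Fintype.card V := by
    simpa using Finset.card_le_univ σ.support
  by_cases h : P σ
  · simp only [h, true_and, if_true]
    rw [Polynomial.coeff_C_mul, Polynomial.coeff_X_pow]
    split_ifs with h1 h2 h2
    · rw [mul_one]
    · exact absurd (by omega : σ.support.card = i) h2
    · exact absurd (by omega : Fintype.card V - i = Fintype.card V - σ.support.card) h1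
    · rw [mul_zero]
  · simp [h]

lemma phiP_eq (hbip : G.Colorable 2) :
    phiP G = ∑ σ : Equiv.Perm V,
      if PermCompat G σ then
        C ((-1 : ℝ) ^ (σ.support.card / 2) * ((Equiv.Perm.sign σ : ℤ) : ℝ)) *
          X ^ (Fintype.card V - σ.support.card) else 0 := by
  classical
  rw [phiP]
  have step1 : ∀ i ∈ Finset.range (Fintype.card V + 1),
      (if Even i then
        C ((-1 : ℝ) ^ (i / 2) * (charPolyG ℝ G).coeff (Fintype.card V - i)) *
          X ^ (Fintype.card V - i)
       else 0)
      = ∑ σ : Equiv.Perm V,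
          if Even i ∧ PermCompat G σ ∧ σ.support.card = i then
            C ((-1 : ℝ) ^ (i / 2) *
              (((Equiv.Perm.sign σ : ℤ) : ℝ) * (-1 : ℝ) ^ σ.support.card)) *
              X ^ (Fintype.card V - i)
          else 0 := by
    intro i hi
    rw [Finset.mem_range] at hi
    have hcoeff := coeff_sum_aux (PermCompat G)
      (fun σ => ((Equiv.Perm.sign σ : ℤ) : ℝ) * (-1 : ℝ) ^ σ.support.card) i (by omega)
    rw [char_poly_eq G, hcoeff]
    by_cases he : Even i
    · simp only [he, true_and, if_true]
      rw [Finset.mul_sum, map_sum, Finset.sum_mul]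
      refine Finset.sum_congr rfl fun σ _ => ?_
      by_cases hp : PermCompat G σ ∧ σ.support.card = i
      · rw [if_pos hp, if_pos hp]
      · rw [if_neg hp, if_neg hp, mul_zero, map_zero, zero_mul]
    · simp only [he, false_and, if_false]
      rw [Finset.sum_const_zero]
  rw [Finset.sum_congr rfl step1, Finset.sum_comm]
  refine Finset.sum_congr rfl fun σ _ => ?_
  have hd : σ.support.card ≤ Fintype.card V := by
    simpa using Finset.card_le_univ σ.support
  rw [Finset.sum_eq_single σ.support.card]
  · by_cases h : PermCompat G σ
    · have heven := even_card_of_compat G hbip σ h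
      rw [if_pos ⟨heven, h, rfl⟩, if_pos h, heven.neg_one_pow, mul_one]
    · rw [if_neg (by tauto), if_neg h]
  · intro i _ hne
    rw [if_neg (by tauto)]
  · intro hnotmem
    exact absurd (Finset.mem_range.mpr (by omega)) hnotmem

end PolyLemmas


/-- Borowiecki's corollary. A bipartite graph `G` is `C_{4k}`-free iff its
permanental polynomial equals its modified characteristic polynomial. -/
theorem stmt_9 {V : Type*} [Fintype V] (G : SimpleGraph V) (hbip : G.Colorable 2) :
    C4kFree G ↔ permPolyG ℝ G = phiP G := by
  classical
  constructor
  · intro hfree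
    rw [perm_poly_eq G hbip, phiP_eq G hbip]
    refine Finset.sum_congr rfl fun σ _ => ?_
    by_cases h : PermCompat G σ
    · rw [if_pos h, if_pos h, sign_compat hbip hfree σ h, ← pow_add]
      have : Even (σ.support.card / 2 + σ.support.card / 2) := Even.add_self _
      rw [this.neg_one_pow, map_one, one_mul]
    · rw [if_neg h, if_neg h]
  · intro heq
    by_contra hnotfree
    rw [C4kFree, not_not] at hnotfree
    obtain ⟨v, w, hwc, hwd⟩ := hnotfree
    have hw3 := hwc.three_le_length
    have hw4 : 4 ≤ w.length := by
      obtain ⟨k, hk⟩ := hwd; omega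
    obtain ⟨σ₀, hσc, hσco, hσcard⟩ := walk_gives_perm v w hwc hw4
    set ℓ := w.length with hℓ
    have hlen : ℓ ≤ Fintype.card V := by
      rw [← hσcard]
      simpa using Finset.card_le_univ σ₀.support
    -- compare coefficients of degree n - ℓ
    have hc1 : (permPolyG ℝ G).coeff (Fintype.card V - ℓ)
        = ∑ σ : Equiv.Perm V, if PermCompat G σ ∧ σ.support.card = ℓ then (1 : ℝ) else 0 := by
      rw [perm_poly_eq G hbip]
      have := coeff_sum_aux (PermCompat G) (fun _ => (1 : ℝ)) ℓ hlen
      simpa using this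
    have hc2 : (phiP G).coeff (Fintype.card V - ℓ)
        = ∑ σ : Equiv.Perm V, if PermCompat G σ ∧ σ.support.card = ℓ then
            (-1 : ℝ) ^ (σ.support.card / 2) * ((Equiv.Perm.sign σ : ℤ) : ℝ) else 0 := by
      rw [phiP_eq G hbip]
      exact coeff_sum_aux (PermCompat G)
        (fun σ => (-1 : ℝ) ^ (σ.support.card / 2) * ((Equiv.Perm.sign σ : ℤ) : ℝ)) ℓ hlen
    have hstrict : (phiP G).coeff (Fintype.card V - ℓ)
        < (permPolyG ℝ G).coeff (Fintype.card V - ℓ) := by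
      rw [hc1, hc2]
      refine Finset.sum_lt_sum (fun σ _ => ?_) ⟨σ₀, Finset.mem_univ σ₀, ?_⟩
      · by_cases h : PermCompat G σ ∧ σ.support.card = ℓ
        · rw [if_pos h, if_pos h]
          rcases Int.units_eq_one_or (Equiv.Perm.sign σ) with hs | hs <;>
            rcases Nat.even_or_odd (σ.support.card / 2) with hp | hp <;>
              rw [hp.neg_one_pow, hs] <;> norm_num
        · rw [if_neg h, if_neg h]
      · have h : PermCompat G σ₀ ∧ σ₀.support.card = ℓ := ⟨hσco, hσcard⟩
        rw [if_pos h, if_pos h]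
        have hsign : Equiv.Perm.sign σ₀ = -1 := by
          rw [hσc.sign, hσcard]
          have : Even ℓ := by obtain ⟨k, hk⟩ := hwd; exact ⟨2 * k, by omega⟩
          rw [this.neg_one_pow]
        have hhalf : Even (σ₀.support.card / 2) := by
          obtain ⟨k, hk⟩ := hwd
          rw [hσcard]
          exact ⟨k, by omega⟩
        rw [hsign, hhalf.neg_one_pow]
        norm_num
    rw [heq] at hstrict
    exact lt_irrefl _ hstrict

end
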